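/- For reals 0 < 𝕊_l ≤ 𝕊_u and P_t ≥ 0, the left-side impermanent loss per unit liquidity satisfies 2(√(𝕊_l) − √(P_t))⁺ − 2(√(𝕊_u) − √(P_t))⁺ − (1/√(𝕊_l))(𝕊_l − P_t)⁺ + (1/√(𝕊_u))(𝕊_u − P_t)⁺ = −(1/2)·∫_{𝕊_l}^{𝕊_u} K^(−3/2)·(K − P_t)⁺ dK. -/

import Mathlib

open MeasureTheory

lemma rpow_neg32 {x : ℝ} (hx : 0 < x) :
    x ^ (-(3 : ℝ) / 2) = 1 / (x * Real.sqrt x) := by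
  have h1 : x ^ ((3 : ℝ) / 2) = x * Real.sqrt x := by
    have : (3 : ℝ) / 2 = 1 + 1 / 2 := by norm_num
    rw [this, Real.rpow_add hx, Real.rpow_one, ← Real.sqrt_eq_rpow]
  rw [show -(3 : ℝ) / 2 = -((3:ℝ)/2) by ring, Real.rpow_neg hx.le, h1]
  simp [one_div]

lemma hderivG (Pt : ℝ) {x : ℝ} (hx : 0 < x) :
    HasDerivAt (fun K => 2 * Real.sqrt K + 2 * Pt / Real.sqrt K)
      (x ^ (-(3 : ℝ) / 2) * (x - Pt)) x := by
  have hs : Real.sqrt x ≠ 0 := by positivity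
  have h1 : HasDerivAt Real.sqrt (1 / (2 * Real.sqrt x)) x :=
    Real.hasDerivAt_sqrt hx.ne'
  have h2 : HasDerivAt (fun K => 2 * Real.sqrt K) (2 * (1 / (2 * Real.sqrt x))) x :=
    h1.const_mul 2
  have h3 : HasDerivAt (fun K => 2 * Pt / Real.sqrt K)
      (-(2 * Pt * (1 / (2 * Real.sqrt x))) / (Real.sqrt x) ^ 2) x := by
    simpa [div_eq_mul_inv] using
      ((hasDerivAt_const x (2 * Pt)).fun_div h1 hs)
  have := h2.add h3
  refine this.congr_deriv ?_
  rw [rpow_neg32 hx]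
  have hxx : Real.sqrt x * Real.sqrt x = x := Real.mul_self_sqrt hx.le
  field_simp
  ring_nf
  rw [Real.sq_sqrt hx.le]
  ring

lemma contOn (Pt a b : ℝ) (ha : 0 < a) (hab : a ≤ b) :
    ContinuousOn (fun K : ℝ => K ^ (-(3 : ℝ) / 2) * max (K - Pt) 0) (Set.uIcc a b) := by
  apply ContinuousOn.mul
  · intro x hx
    have hx0 : x ≠ 0 := by
      rw [Set.uIcc_of_le hab] at hx
      exact (lt_of_lt_of_le ha hx.1).ne'
    exact (Real.continuousAt_rpow_const x _ (Or.inl hx0)).continuousWithinAt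
  · exact ((continuous_id.sub continuous_const).max continuous_const).continuousOn

lemma ftc (Pt a b : ℝ) (ha : 0 < a) (hab : a ≤ b) (hPa : Pt ≤ a) :
    (∫ K in a..b, K ^ (-(3 : ℝ) / 2) * max (K - Pt) 0)
      = (2 * Real.sqrt b + 2 * Pt / Real.sqrt b)
        - (2 * Real.sqrt a + 2 * Pt / Real.sqrt a) := by
  have heq : ∀ x ∈ Set.uIcc a b,
      (fun K : ℝ => K ^ (-(3 : ℝ) / 2) * max (K - Pt) 0) x
        = x ^ (-(3 : ℝ) / 2) * (x - Pt) := by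
    intro x hx
    rw [Set.uIcc_of_le hab] at hx
    have : Pt ≤ x := le_trans hPa hx.1
    simp [max_eq_left (sub_nonneg.mpr this)]
  rw [intervalIntegral.integral_congr heq]
  apply intervalIntegral.integral_eq_sub_of_hasDerivAt
  · intro x hx
    rw [Set.uIcc_of_le hab] at hx
    exact hderivG Pt (lt_of_lt_of_le ha hx.1)
  · apply ContinuousOn.intervalIntegrable
    apply ContinuousOn.mul
    · intro x hx
      have hx0 : x ≠ 0 := by
        rw [Set.uIcc_of_le hab] at hx
        exact (lt_of_lt_of_le ha hx.1).ne'
      exact (Real.continuousAt_rpow_const x _ (Or.inl hx0)).continuousWithinAt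
    · exact (continuous_id.sub continuous_const).continuousOn

theorem UILL_integral_representation
    (Sl Su Pt : ℝ) (hSl : 0 < Sl) (hlu : Sl ≤ Su) (hPt : 0 ≤ Pt) :
    2 * max (Real.sqrt Sl - Real.sqrt Pt) 0
      - 2 * max (Real.sqrt Su - Real.sqrt Pt) 0
      - (1 / Real.sqrt Sl) * max (Sl - Pt) 0
      + (1 / Real.sqrt Su) * max (Su - Pt) 0
    = -(1 / 2) * ∫ K in Sl..Su, K ^ (-(3 : ℝ) / 2) * max (K - Pt) 0 := by
  have hSu : 0 < Su := lt_of_lt_of_le hSl hlu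
  have hsl : (0:ℝ) < Real.sqrt Sl := Real.sqrt_pos.mpr hSl
  have hsu : (0:ℝ) < Real.sqrt Su := Real.sqrt_pos.mpr hSu
  have hll : Real.sqrt Sl * Real.sqrt Sl = Sl := Real.mul_self_sqrt hSl.le
  have huu : Real.sqrt Su * Real.sqrt Su = Su := Real.mul_self_sqrt hSu.le
  rcases le_or_gt Pt Sl with hPl | hPl
  · -- Pt ≤ Sl
    rw [ftc Pt Sl Su hSl hlu hPl]
    have h1 : max (Real.sqrt Sl - Real.sqrt Pt) 0 = Real.sqrt Sl - Real.sqrt Pt :=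
      max_eq_left (sub_nonneg.mpr (Real.sqrt_le_sqrt hPl))
    have h2 : max (Real.sqrt Su - Real.sqrt Pt) 0 = Real.sqrt Su - Real.sqrt Pt :=
      max_eq_left (sub_nonneg.mpr (Real.sqrt_le_sqrt (hPl.trans hlu)))
    have h3 : max (Sl - Pt) 0 = Sl - Pt := max_eq_left (sub_nonneg.mpr hPl)
    have h4 : max (Su - Pt) 0 = Su - Pt := max_eq_left (sub_nonneg.mpr (hPl.trans hlu))
    have e1 : (1 / Real.sqrt Sl) * (Sl - Pt) = Real.sqrt Sl - Pt / Real.sqrt Sl := by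
      field_simp
      rw [Real.sq_sqrt hSl.le]
    have e2 : (1 / Real.sqrt Su) * (Su - Pt) = Real.sqrt Su - Pt / Real.sqrt Su := by
      field_simp
      rw [Real.sq_sqrt hSu.le]
    rw [h1, h2, h3, h4, e1, e2]
    ring
  · rcases le_or_gt Pt Su with hPu | hPu
    · -- Sl ≤ Pt ≤ Su
      have hPt0 : 0 < Pt := lt_of_le_of_lt hSl.le hPl
      have hsp : (0:ℝ) < Real.sqrt Pt := Real.sqrt_pos.mpr hPt0
      have hpp : Real.sqrt Pt * Real.sqrt Pt = Pt := Real.mul_self_sqrt hPt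
      have hint1 : IntervalIntegrable
          (fun K : ℝ => K ^ (-(3 : ℝ) / 2) * max (K - Pt) 0) volume Sl Pt :=
        (contOn Pt Sl Pt hSl hPl.le).intervalIntegrable
      have hint2 : IntervalIntegrable
          (fun K : ℝ => K ^ (-(3 : ℝ) / 2) * max (K - Pt) 0) volume Pt Su :=
        (contOn Pt Pt Su hPt0 hPu).intervalIntegrable
      rw [← intervalIntegral.integral_add_adjacent_intervals hint1 hint2]
      have hzero : (∫ K in Sl..Pt, K ^ (-(3 : ℝ) / 2) * max (K - Pt) 0) = 0 := by
        rw [intervalIntegral.integral_congr (g := fun _ => (0:ℝ)) ?_,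
          intervalIntegral.integral_zero]
        intro x hx
        rw [Set.uIcc_of_le hPl.le] at hx
        simp [max_eq_right (sub_nonpos.mpr hx.2)]
      rw [hzero, zero_add, ftc Pt Pt Su hPt0 hPu le_rfl]
      have h1 : max (Real.sqrt Sl - Real.sqrt Pt) 0 = 0 :=
        max_eq_right (sub_nonpos.mpr (Real.sqrt_le_sqrt hPl.le))
      have h2 : max (Real.sqrt Su - Real.sqrt Pt) 0 = Real.sqrt Su - Real.sqrt Pt :=
        max_eq_left (sub_nonneg.mpr (Real.sqrt_le_sqrt hPu))
      have h3 : max (Sl - Pt) 0 = 0 := max_eq_right (sub_nonpos.mpr hPl.le)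
      have h4 : max (Su - Pt) 0 = Su - Pt := max_eq_left (sub_nonneg.mpr hPu)
      have e2 : (1 / Real.sqrt Su) * (Su - Pt) = Real.sqrt Su - Pt / Real.sqrt Su := by
        field_simp
        rw [Real.sq_sqrt hSu.le]
      have e3 : 2 * Pt / Real.sqrt Pt = 2 * Real.sqrt Pt := by
        rw [mul_div_assoc, Real.div_sqrt]
      rw [h1, h2, h3, h4, e2, e3]
      ring
    · -- Su < Pt
      have h1 : max (Real.sqrt Sl - Real.sqrt Pt) 0 = 0 :=
        max_eq_right (sub_nonpos.mpr (Real.sqrt_le_sqrt (hlu.trans hPu.le)))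
      have h2 : max (Real.sqrt Su - Real.sqrt Pt) 0 = 0 :=
        max_eq_right (sub_nonpos.mpr (Real.sqrt_le_sqrt hPu.le))
      have h3 : max (Sl - Pt) 0 = 0 := max_eq_right (sub_nonpos.mpr (hlu.trans hPu.le))
      have h4 : max (Su - Pt) 0 = 0 := max_eq_right (sub_nonpos.mpr hPu.le)
      have hzero : (∫ K in Sl..Su, K ^ (-(3 : ℝ) / 2) * max (K - Pt) 0) = 0 := by
        rw [intervalIntegral.integral_congr (g := fun _ => (0:ℝ)) ?_,
          intervalIntegral.integral_zero]
        intro x hx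
        rw [Set.uIcc_of_le hlu] at hx
        simp [max_eq_right (sub_nonpos.mpr (hx.2.trans hPu.le))]
      rw [h1, h2, h3, h4, hzero]
      ring
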